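/- Fix t ∈ [0,T] and suppose Λ_t = Λ(t,·,·,·): ℝ^ℓ×ℝ^ℓ×P₂(ℝ^ℓ) → ℝ^m is Lipschitz continuous (Euclidean in the vector arguments, W₂ in the measure argument). Then the map φ_t: P₂(ℝ^ℓ×ℝ^ℓ) → P₂(ℝ^ℓ×ℝ^m) defined by φ_t(ξ) = ξ ∘ (id_ℓ, Λ_t(·,·,μ))^{-1}, where μ is the first marginal of ξ and id_ℓ the projection onto the first ℝ^ℓ coordinate, is Lipschitz continuous with respect to the 2-Wasserstein distance. -/

import Mathlib

open MeasureTheory ProbabilityTheory Filter Set Matrix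
open scoped ENNReal NNReal InnerProductSpace BigOperators Topology

noncomputable section

namespace MFLDP

/-- Euclidean state space `ℝ^n`. -/
abbrev Vec (n : ℕ) := EuclideanSpace ℝ (Fin n)

/-- Matrix-vector multiplication on Euclidean spaces. -/
def matVec {a b : ℕ} (M : Matrix (Fin a) (Fin b) ℝ) (v : Vec b) : Vec a :=
  (EuclideanSpace.equiv (Fin a) ℝ).symm (M.mulVec (EuclideanSpace.equiv (Fin b) ℝ v))

/-- The (real) second moment `∫ ‖v‖² dμ` of a measure. -/
def mom2 {E : Type*} [MeasurableSpace E] [NormedAddCommGroup E] (μ : Measure E) : ℝ :=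
  ∫ v, ‖v‖ ^ 2 ∂μ

/-- Membership in `P₂(E)`: probability measures with finite second moment. -/
def memP2 {E : Type*} [MeasurableSpace E] [NormedAddCommGroup E] (μ : Measure E) : Prop :=
  IsProbabilityMeasure μ ∧ (∫⁻ v, (‖v‖₊ : ℝ≥0∞) ^ 2 ∂μ) < ⊤

/-- `π` is a coupling of the measures `μ` and `ν`. -/
def IsCoupling {E F : Type*} [MeasurableSpace E] [MeasurableSpace F]
    (π : Measure (E × F)) (μ : Measure E) (ν : Measure F) : Prop :=
  π.map Prod.fst = μ ∧ π.map Prod.snd = ν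

/-- The second order Wasserstein distance, defined through couplings. -/
def W2 {E : Type*} [MeasurableSpace E] [PseudoMetricSpace E] (μ ν : Measure E) : ℝ :=
  Real.sqrt (sInf { r : ℝ | ∃ π : Measure (E × E),
    IsCoupling π μ ν ∧ r = ∫ p, dist p.1 p.2 ^ 2 ∂π })

/-- Empirical measure `L^N(z) = N⁻¹ ∑ δ_{z_i}` of a tuple `z`. -/
def emp {E : Type*} [MeasurableSpace E] {N : ℕ} (z : Fin N → E) : Measure E :=
  ((N : ℝ≥0∞)⁻¹) • ∑ i, Measure.dirac (z i)

lemma emp_isProbability {E : Type*} [MeasurableSpace E] {N : ℕ} (z : Fin (N + 1) → E) :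
    IsProbabilityMeasure (emp z) := by
  constructor
  simp only [emp, Measure.smul_apply, Measure.coe_finset_sum, Finset.sum_apply,
    measure_univ, smul_eq_mul]
  rw [Finset.sum_const, Finset.card_univ, Fintype.card_fin, nsmul_eq_mul, mul_one]
  exact ENNReal.inv_mul_cancel (by exact_mod_cast Nat.succ_ne_zero N) (by simp)

/-- Empirical probability measure; for `N = 0` it is a Dirac mass at a default point. -/
def empProb {E : Type*} [MeasurableSpace E] (e₀ : E) :
    ∀ {N : ℕ}, (Fin N → E) → ProbabilityMeasure E
  | 0, _ => ⟨Measure.dirac e₀, by infer_instance⟩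
  | (_ + 1), z => ⟨emp z, emp_isProbability z⟩

/-- A `d`-dimensional Brownian motion (with respect to a given measure `P`). -/
structure IsBrownianMotion {Ω : Type*} [MeasurableSpace Ω] (P : Measure Ω) {d : ℕ}
    (W : ℝ → Ω → Vec d) : Prop where
  init : ∀ᵐ ω ∂P, W 0 ω = 0
  cont : ∀ ω, Continuous fun t => W t ω
  meas : ∀ t, Measurable (W t)
  incr_law : ∀ s t : ℝ, 0 ≤ s → s ≤ t →
    P.map (fun ω => W t ω - W s ω)
      = (Measure.pi fun _ : Fin d => gaussianReal 0 (Real.toNNReal (t - s))).map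
          (MeasurableEquiv.toLp 2 (Fin d → ℝ))
  indep_incr : ∀ (n : ℕ) (τ : Fin (n + 1) → ℝ), Monotone τ → (∀ i, 0 ≤ τ i) →
    iIndepFun (m := fun _ : Fin n => (inferInstance : MeasurableSpace (Vec d)))
      (fun i ω => W (τ i.succ) ω - W (τ i.castSucc) ω) P

section LDP

variable {E : Type*} [MeasurableSpace E] [TopologicalSpace E] [OpensMeasurableSpace E]

/-- A good rate function: lower semicontinuous with (weakly) compact sublevel sets. -/
def GoodRateFn (I : ProbabilityMeasure E → ℝ≥0∞) : Prop :=
  LowerSemicontinuous I ∧ ∀ a : ℝ≥0, IsCompact { μ : ProbabilityMeasure E | I μ ≤ a }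

/-- The Laplace principle formulation of the large deviation principle for a sequence of random
probability measures `μN`, with rate function `I`. -/
def SatisfiesLDP {Ω : Type*} [MeasurableSpace Ω] (P : Measure Ω)
    (μN : (N : ℕ) → Ω → ProbabilityMeasure E) (I : ProbabilityMeasure E → ℝ≥0∞) : Prop :=
  GoodRateFn I ∧
    ∀ F : BoundedContinuousFunction (ProbabilityMeasure E) ℝ,
      Tendsto
        (fun N : ℕ =>
          ((- (1 / (N : ℝ)) * Real.log (∫ ω, Real.exp (-(N : ℝ) * F (μN N ω)) ∂P) : ℝ) : EReal))
        atTop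
        (𝓝 (⨅ μ : ProbabilityMeasure E, ((F μ : EReal) - ((I μ : ℝ≥0∞) : EReal))))

end LDP

section Path

variable {T : ℝ} {n : ℕ}

instance pathMeasurableSpace : MeasurableSpace C(Set.Icc (0:ℝ) T, Vec n) := borel _

instance pathBorelSpace : BorelSpace C(Set.Icc (0:ℝ) T, Vec n) := ⟨rfl⟩

/-- The path of a (surely) continuous process. -/
def pathOf {Ω : Type*} (X : ℝ → Ω → Vec n) (h : ∀ ω, Continuous fun t => X t ω) (ω : Ω) :
    C(Set.Icc (0:ℝ) T, Vec n) :=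
  ⟨fun s => X s ω, (h ω).comp continuous_subtype_val⟩

/-- Time-`t` marginal of a path-space measure. -/
def marginal (θ : Measure C(Set.Icc (0:ℝ) T, Vec n)) (t : Set.Icc (0:ℝ) T) : Measure (Vec n) :=
  θ.map fun γ => γ t

end Path

/-- The rate function `I(θ)` of the controlled McKean–Vlasov system with drift `D`:
`I(θ) = inf { E[½∫₀ᵀ |u_t|²dt] : u ∈ 𝒰, law(X^u) = θ }` where
`dX^u = (D(t,X^u,law(X^u)) + σ u_t) dt + σ dW_t`, `X^u_0 = x₀`  (with `inf ∅ = ∞`). -/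
def rateI (ℓ d : ℕ) (T : ℝ) (x₀ : Vec ℓ) (σ : Matrix (Fin ℓ) (Fin d) ℝ)
    (D : ℝ → Vec ℓ → Measure (Vec ℓ) → Vec ℓ)
    (θ : ProbabilityMeasure C(Set.Icc (0:ℝ) T, Vec ℓ)) : ℝ≥0∞ :=
  sInf { r : ℝ≥0∞ | ∃ (Ω' : Type) (m' : MeasurableSpace Ω') (P' : Measure Ω')
    (_hP' : IsProbabilityMeasure P') (ℱ' : Filtration ℝ m') (W' : ℝ → Ω' → Vec d)
    (u : ℝ → Ω' → Vec d) (X : ℝ → Ω' → Vec ℓ) (hX : ∀ ω, Continuous fun t => X t ω),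
    IsBrownianMotion P' W' ∧ Adapted ℱ' W' ∧ ProgMeasurable ℱ' u ∧
    (∫⁻ ω, ENNReal.ofReal (∫ t in (0:ℝ)..T, ‖u t ω‖ ^ 2) ∂P') < ⊤ ∧
    (∀ᵐ ω ∂P', ∀ t ∈ Set.Icc (0:ℝ) T,
      X t ω = x₀ + (∫ s in (0:ℝ)..t, (D s (X s ω) (P'.map (X s)) + matVec σ (u s ω)))
        + matVec σ (W' t ω)) ∧
    P'.map (pathOf X hX) = (θ : Measure C(Set.Icc (0:ℝ) T, Vec ℓ)) ∧
    r = ∫⁻ ω, ENNReal.ofReal (∫ t in (0:ℝ)..T, ‖u t ω‖ ^ 2 / 2) ∂P' }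

end MFLDP

namespace MFLDP

/-- Empirical measure of the paths of an `N`-tuple of (surely continuous) processes,
as a random probability measure on path space. -/
def empPaths {n : ℕ} {Ω : Type*} (T : ℝ) {N : ℕ} (X : Fin N → ℝ → Ω → Vec n)
    (h : ∀ i ω, Continuous fun t => X i t ω) (ω : Ω) :
    ProbabilityMeasure C(Set.Icc (0:ℝ) T, Vec n) :=
  empProb (ContinuousMap.const _ (0 : Vec n)) fun i => pathOf (X i) (h i) ω

end MFLDP

namespace MFLDP

variable {ℓ m : ℕ}

/-- `ξ = law(χ, V(t,χ,μ))` for `χ ~ μ`. -/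
def xiOf (V : ℝ → Vec ℓ → Measure (Vec ℓ) → Vec ℓ) (t : ℝ) (μ : Measure (Vec ℓ)) :
    Measure (Vec ℓ × Vec ℓ) :=
  μ.map fun z => (z, V t z μ)

/-- `∑_{j,k} Q_{jk} ∂²_{x_j x_k} φ(x)`, the trace term `tr(∂ₓₓφ Q)` (coordinatewise). -/
def hessTrace {n ℓ' : ℕ} (Q : Matrix (Fin n) (Fin n) ℝ) (φ : Vec n → Vec ℓ') (x : Vec n) :
    Vec ℓ' :=
  ∑ j, ∑ k, Q j k •
    fderiv ℝ (fun x' => fderiv ℝ φ x' (EuclideanSpace.single k 1)) x (EuclideanSpace.single j 1)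

/-- `∑_{j,k} Q_{jk} ∂_{y_k} M(y)_{i j}`: the mixed trace `tr(∂_y ∂_μ V (y) Q)`. -/
def mixTrace {ℓ' : ℕ} (Q : Matrix (Fin ℓ') (Fin ℓ') ℝ)
    (M : Vec ℓ' → Matrix (Fin ℓ') (Fin ℓ') ℝ) (y : Vec ℓ') : Vec ℓ' :=
  (EuclideanSpace.equiv (Fin ℓ') ℝ).symm fun i =>
    ∑ j, ∑ k, Q j k * fderiv ℝ (fun y' => M y' i j) y (EuclideanSpace.single k 1)

end MFLDP

namespace MFLDP

variable {Ω : Type*} [MeasurableSpace Ω]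

/-- The `S^∞`-norm of a real-valued process: essential supremum over `ω` of
`sup_{t ∈ [0,T]} |·|`. -/
def SInfty (P : Measure Ω) (T : ℝ) (g : ℝ → Ω → ℝ) : ℝ≥0∞ :=
  essSup (fun ω => ⨆ t : Set.Icc (0:ℝ) T, ENNReal.ofReal |g (t : ℝ) ω|) P

end MFLDP
namespace MFLDP

section W2Aux

variable {E : Type*} [MeasurableSpace E] [PseudoMetricSpace E]

/-- The set of squared transport costs over couplings of `μ` and `ν`. -/
def cset (μ ν : Measure E) : Set ℝ :=
  { r : ℝ | ∃ π : Measure (E × E), IsCoupling π μ ν ∧ r = ∫ p, dist p.1 p.2 ^ 2 ∂π }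

lemma W2_eq (μ ν : Measure E) : W2 μ ν = Real.sqrt (sInf (cset μ ν)) := rfl

lemma cset_nonneg {μ ν : Measure E} {r : ℝ} (hr : r ∈ cset μ ν) : 0 ≤ r := by
  obtain ⟨π, -, rfl⟩ := hr
  exact integral_nonneg fun p => sq_nonneg _

lemma cset_bddBelow (μ ν : Measure E) : BddBelow (cset μ ν) :=
  ⟨0, fun r hr => cset_nonneg hr⟩

lemma sInf_cset_nonneg (μ ν : Measure E) : 0 ≤ sInf (cset μ ν) := by
  rcases (cset μ ν).eq_empty_or_nonempty with h | h
  · simp [h, Real.sInf_empty]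
  · exact le_csInf h fun r hr => cset_nonneg hr

lemma sq_W2 (μ ν : Measure E) : W2 μ ν ^ 2 = sInf (cset μ ν) :=
  Real.sq_sqrt (sInf_cset_nonneg μ ν)

lemma W2_nonneg (μ ν : Measure E) : 0 ≤ W2 μ ν := Real.sqrt_nonneg _

lemma W2_self [OpensMeasurableSpace E] [SecondCountableTopology E] (μ : Measure E) :
    W2 μ μ = 0 := by
  have hdiag : Measurable fun x : E => (x, x) := measurable_id.prodMk measurable_id
  have hmem : (0 : ℝ) ∈ cset μ μ := by
    refine ⟨μ.map fun x => (x, x), ⟨?_, ?_⟩, ?_⟩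
    · rw [Measure.map_map measurable_fst hdiag]; exact Measure.map_id
    · rw [Measure.map_map measurable_snd hdiag]; exact Measure.map_id
    · have hmeas : AEStronglyMeasurable (fun p : E × E => dist p.1 p.2 ^ 2)
          (μ.map fun x => (x, x)) :=
        ((continuous_fst.dist continuous_snd).pow 2).aestronglyMeasurable
      rw [integral_map hdiag.aemeasurable hmeas]
      simp
  have h1 : sInf (cset μ μ) ≤ 0 := csInf_le (cset_bddBelow μ μ) hmem
  have h2 := sInf_cset_nonneg μ μ
  rw [W2_eq, le_antisymm h1 h2, Real.sqrt_zero]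

lemma integrable_norm_sq {F : Type*} [MeasurableSpace F] [NormedAddCommGroup F]
    [OpensMeasurableSpace F] {μ : Measure F}
    (h : (∫⁻ v, (‖v‖₊ : ℝ≥0∞) ^ 2 ∂μ) < ⊤) :
    Integrable (fun v => ‖v‖ ^ 2) μ := by
  refine ⟨(continuous_norm.pow 2).aestronglyMeasurable, ?_⟩
  have : ∀ v : F, (‖(‖v‖ ^ 2 : ℝ)‖ₑ) = (‖v‖₊ : ℝ≥0∞) ^ 2 := by
    intro v
    rw [enorm_eq_nnnorm]
    rw [pow_two, pow_two]
    push_cast [nnnorm_mul, nnnorm_norm]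
    ring
  simpa only [HasFiniteIntegral, this] using h

lemma sq_bound {K w a b c d : ℝ} (hK0 : 0 ≤ K) (hw0 : 0 ≤ w) (ha0 : 0 ≤ a) (hb0 : 0 ≤ b)
    (hc0 : 0 ≤ c) (hd0 : 0 ≤ d) (hcle : c ≤ K * (a + b + w)) (hda : a ≤ d) (hdb : b ≤ d) :
    max a c ^ 2 ≤ 3 * (1 + K) ^ 2 * (2 * d ^ 2 + w ^ 2) := by
  have hmaxle : max a c ≤ a + c := max_le (le_add_of_nonneg_right hc0) (le_add_of_nonneg_left ha0)
  have h5 : a + c ≤ (1 + K) * (a + b + w) := by nlinarith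
  have h6 : (a + c) ^ 2 ≤ ((1 + K) * (a + b + w)) ^ 2 := by
    have h := mul_self_le_mul_self (by positivity) h5
    simpa [pow_two] using h
  have h7 : (a + b + w) ^ 2 ≤ 3 * (a ^ 2 + b ^ 2 + w ^ 2) := by
    nlinarith [sq_nonneg (a - b), sq_nonneg (a - w), sq_nonneg (b - w)]
  have h9 : max a c ^ 2 ≤ (a + c) ^ 2 := by
    have h := mul_self_le_mul_self (le_trans ha0 (le_max_left a c)) hmaxle
    simpa [pow_two] using h
  have h8a : a ^ 2 ≤ d ^ 2 := by nlinarith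
  have h8b : b ^ 2 ≤ d ^ 2 := by nlinarith
  have h10 : ((1 + K) * (a + b + w)) ^ 2 = (1 + K) ^ 2 * (a + b + w) ^ 2 := mul_pow _ _ _
  nlinarith [mul_le_mul_of_nonneg_left h7 (sq_nonneg (1 + K)),
    mul_le_mul_of_nonneg_left h8a (sq_nonneg (1 + K)),
    mul_le_mul_of_nonneg_left h8b (sq_nonneg (1 + K))]

end W2Aux

set_option maxHeartbeats 1000000 in
/-- if `Λ_t` is Lipschitz continuous (Euclidean in the vector arguments, `W₂`
in the measure argument), then `φ_t : P₂(ℝ^ℓ×ℝ^ℓ) → P₂(ℝ^ℓ×ℝ^m)`,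
`φ_t(ξ) = ξ ∘ (id, Λ_t(·,·,μ))⁻¹` with `μ` the first marginal of `ξ`, is Lipschitz continuous
with respect to the 2-Wasserstein distance. -/


theorem phi_W2_lipschitz {ℓ m : ℕ} (T t : ℝ) (ht : t ∈ Set.Icc (0:ℝ) T)
    (Λ : Vec ℓ → Vec ℓ → MeasureTheory.Measure (Vec ℓ) → Vec m) (LΛ : ℝ)
    (hΛ : ∀ (x x' y y' : Vec ℓ) (μ μ' : MeasureTheory.Measure (Vec ℓ)),
      memP2 μ → memP2 μ' →
      ‖Λ x y μ - Λ x' y' μ'‖ ≤ LΛ * (‖x - x'‖ + ‖y - y'‖ + W2 μ μ')) :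
    ∃ C > (0:ℝ), ∀ ξ ξ' : MeasureTheory.Measure (Vec ℓ × Vec ℓ), memP2 ξ → memP2 ξ' →
      W2 (ξ.map fun p => (p.1, Λ p.1 p.2 (ξ.map Prod.fst)))
          (ξ'.map fun p => (p.1, Λ p.1 p.2 (ξ'.map Prod.fst)))
        ≤ C * W2 ξ ξ' := by
  classical
  set K : ℝ := max LΛ 0 with hKdef
  have hK0 : (0:ℝ) ≤ K := le_max_right _ _
  refine ⟨3 * (1 + K), by positivity, ?_⟩
  intro ξ ξ' hξ hξ'
  haveI : BorelSpace ((Vec ℓ × Vec ℓ) × (Vec ℓ × Vec ℓ)) := Prod.borelSpace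
  haveI : BorelSpace ((Vec ℓ × Vec m) × (Vec ℓ × Vec m)) := Prod.borelSpace
  set C : ℝ := 3 * (1 + K) with hCdef
  have hC0 : (0:ℝ) < C := by positivity
  -- upgraded Lipschitz bound with nonnegative constant
  have hΛK : ∀ (x x' y y' : Vec ℓ) (ν ν' : Measure (Vec ℓ)), memP2 ν → memP2 ν' →
      ‖Λ x y ν - Λ x' y' ν'‖ ≤ K * (‖x - x'‖ + ‖y - y'‖ + W2 ν ν') := by
    intro x x' y y' ν ν' hν hν'
    have hX : (0:ℝ) ≤ ‖x - x'‖ + ‖y - y'‖ + W2 ν ν' := by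
      have := W2_nonneg (E := Vec ℓ) ν ν'
      positivity
    exact (hΛ x x' y y' ν ν' hν hν').trans
      (mul_le_mul_of_nonneg_right (le_max_left _ _) hX)
  -- continuity of `p ↦ Λ p.1 p.2 ν`
  have hGcont : ∀ ν : Measure (Vec ℓ), memP2 ν →
      Continuous fun p : Vec ℓ × Vec ℓ => Λ p.1 p.2 ν := by
    intro ν hν
    have : LipschitzWith (Real.toNNReal (2 * K)) fun p : Vec ℓ × Vec ℓ => Λ p.1 p.2 ν := by
      apply LipschitzWith.of_dist_le_mul
      intro p q
      have h0 := hΛK p.1 q.1 p.2 q.2 ν ν hν hν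
      rw [W2_self] at h0
      have h1 : dist p.1 q.1 ≤ dist p q := by rw [Prod.dist_eq]; exact le_max_left _ _
      have h2 : dist p.2 q.2 ≤ dist p q := by rw [Prod.dist_eq]; exact le_max_right _ _
      rw [dist_eq_norm] at h1 h2 ⊢
      rw [Real.coe_toNNReal _ (by positivity)]
      have hd : (0:ℝ) ≤ dist p q := dist_nonneg
      nlinarith
    exact this.continuous
  -- marginals are in P₂
  have hmarg : ∀ ζ : Measure (Vec ℓ × Vec ℓ), memP2 ζ → memP2 (ζ.map Prod.fst) := by
    intro ζ hζ
    haveI := hζ.1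
    constructor
    · exact Measure.isProbabilityMeasure_map measurable_fst.aemeasurable
    · rw [lintegral_map (by fun_prop) measurable_fst]
      refine lt_of_le_of_lt (lintegral_mono fun p => ?_) hζ.2
      gcongr
      exact_mod_cast norm_fst_le p
  set μ := ξ.map Prod.fst with hμdef
  set μ' := ξ'.map Prod.fst with hμ'def
  have hμ : memP2 μ := hmarg ξ hξ
  have hμ' : memP2 μ' := hmarg ξ' hξ'
  set w : ℝ := W2 μ μ' with hwdef
  have hw0 : (0:ℝ) ≤ w := W2_nonneg _ _
  -- the two image maps
  set g₁ : Vec ℓ × Vec ℓ → Vec ℓ × Vec m := fun p => (p.1, Λ p.1 p.2 μ) with hg₁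
  set g₂ : Vec ℓ × Vec ℓ → Vec ℓ × Vec m := fun p => (p.1, Λ p.1 p.2 μ') with hg₂
  have hg₁c : Continuous g₁ := continuous_fst.prodMk (hGcont μ hμ)
  have hg₂c : Continuous g₂ := continuous_fst.prodMk (hGcont μ' hμ')
  have hg₁m : Measurable g₁ := hg₁c.measurable
  have hg₂m : Measurable g₂ := hg₂c.measurable
  -- key estimate: for every transport cost r of (ξ, ξ'), the image admits cost ≤ C² r
  have main : ∀ r ∈ cset ξ ξ', sInf (cset (ξ.map g₁) (ξ'.map g₂)) ≤ C ^ 2 * r := by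
    rintro r ⟨π, hπ, rfl⟩
    set r : ℝ := ∫ z, dist z.1 z.2 ^ 2 ∂π with hrdef
    haveI hπP : IsProbabilityMeasure π := by
      constructor
      have : (π.map Prod.fst) Set.univ = 1 := by rw [hπ.1]; exact hξ.1.measure_univ
      rwa [Measure.map_apply measurable_fst MeasurableSet.univ, Set.preimage_univ] at this
    -- integrability of the component norms
    have hIfst : Integrable (fun z : (Vec ℓ × Vec ℓ) × (Vec ℓ × Vec ℓ) => ‖z.1‖ ^ 2) π := by
      have h := integrable_norm_sq hξ.2
      rw [← hπ.1] at h
      exact (integrable_map_measure h.aestronglyMeasurable measurable_fst.aemeasurable).mp h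
    have hIsnd : Integrable (fun z : (Vec ℓ × Vec ℓ) × (Vec ℓ × Vec ℓ) => ‖z.2‖ ^ 2) π := by
      have h := integrable_norm_sq hξ'.2
      rw [← hπ.2] at h
      exact (integrable_map_measure h.aestronglyMeasurable measurable_snd.aemeasurable).mp h
    have hbd : Integrable (fun z : (Vec ℓ × Vec ℓ) × (Vec ℓ × Vec ℓ) =>
        2 * (‖z.1‖ ^ 2 + ‖z.2‖ ^ 2)) π := by
      simpa using (hIfst.add hIsnd).const_mul 2
    have hd2 : Integrable (fun z : (Vec ℓ × Vec ℓ) × (Vec ℓ × Vec ℓ) => dist z.1 z.2 ^ 2) π := by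
      refine hbd.mono
        ((continuous_fst.dist continuous_snd).pow 2).aestronglyMeasurable
        (Eventually.of_forall fun z => ?_)
      have h1 : dist z.1 z.2 ≤ ‖z.1‖ + ‖z.2‖ := by
        rw [dist_eq_norm]; exact norm_sub_le _ _
      have h2 : (0:ℝ) ≤ dist z.1 z.2 := dist_nonneg
      have h3 : (0:ℝ) ≤ ‖z.1‖ := norm_nonneg _
      have h4 : (0:ℝ) ≤ ‖z.2‖ := norm_nonneg _
      rw [Real.norm_eq_abs, Real.norm_eq_abs, abs_of_nonneg (by positivity),
        abs_of_nonneg (by positivity)]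
      nlinarith [sq_nonneg (‖z.1‖ - ‖z.2‖), mul_self_le_mul_self h2 h1]
    have hr0 : (0:ℝ) ≤ r := integral_nonneg fun z => sq_nonneg _
    -- the marginal coupling gives w² ≤ r
    have hw2r : w ^ 2 ≤ r := by
      have hm2 : Measurable fun z : (Vec ℓ × Vec ℓ) × (Vec ℓ × Vec ℓ) => (z.1.1, z.2.1) :=
        (measurable_fst.fst).prodMk (measurable_snd.fst)
      have hmeas : AEStronglyMeasurable (fun p : Vec ℓ × Vec ℓ => dist p.1 p.2 ^ 2)
          (π.map fun z => (z.1.1, z.2.1)) :=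
        ((continuous_fst.dist continuous_snd).pow 2).aestronglyMeasurable
      have hmem : (∫ z, dist z.1.1 z.2.1 ^ 2 ∂π) ∈ cset μ μ' := by
        refine ⟨π.map fun z => (z.1.1, z.2.1), ⟨?_, ?_⟩, ?_⟩
        · rw [Measure.map_map measurable_fst hm2, hμdef, ← hπ.1,
            Measure.map_map measurable_fst measurable_fst]
          rfl
        · rw [Measure.map_map measurable_snd hm2, hμ'def, ← hπ.2,
            Measure.map_map measurable_fst measurable_snd]
          rfl
        · rw [integral_map hm2.aemeasurable hmeas]
      have hle : (∫ z, dist z.1.1 z.2.1 ^ 2 ∂π) ≤ r := by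
        refine integral_mono_of_nonneg (Eventually.of_forall fun z => sq_nonneg _) hd2
          (Eventually.of_forall fun z => ?_)
        have h1 : dist z.1.1 z.2.1 ≤ dist z.1 z.2 := by
          rw [Prod.dist_eq]; exact le_max_left _ _
        exact pow_le_pow_left₀ dist_nonneg h1 2
      calc w ^ 2 = sInf (cset μ μ') := sq_W2 μ μ'
        _ ≤ ∫ z, dist z.1.1 z.2.1 ^ 2 ∂π := csInf_le (cset_bddBelow _ _) hmem
        _ ≤ r := hle
    -- the image coupling
    set Φ : (Vec ℓ × Vec ℓ) × (Vec ℓ × Vec ℓ) → (Vec ℓ × Vec m) × (Vec ℓ × Vec m) :=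
      fun z => (g₁ z.1, g₂ z.2) with hΦdef
    have hΦm : Measurable Φ := (hg₁m.comp measurable_fst).prodMk (hg₂m.comp measurable_snd)
    have hmeasF : AEStronglyMeasurable (fun p : (Vec ℓ × Vec m) × (Vec ℓ × Vec m) =>
        dist p.1 p.2 ^ 2) (π.map Φ) :=
      ((continuous_fst.dist continuous_snd).pow 2).aestronglyMeasurable
    have hmemF : (∫ p, dist p.1 p.2 ^ 2 ∂(π.map Φ)) ∈ cset (ξ.map g₁) (ξ'.map g₂) := by
      refine ⟨π.map Φ, ⟨?_, ?_⟩, rfl⟩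
      · rw [Measure.map_map measurable_fst hΦm, ← hπ.1, Measure.map_map hg₁m measurable_fst]
        rfl
      · rw [Measure.map_map measurable_snd hΦm, ← hπ.2, Measure.map_map hg₂m measurable_snd]
        rfl
    have hval : (∫ p, dist p.1 p.2 ^ 2 ∂(π.map Φ)) ≤ C ^ 2 * r := by
      rw [integral_map hΦm.aemeasurable hmeasF]
      have hRint : Integrable
          (fun z : (Vec ℓ × Vec ℓ) × (Vec ℓ × Vec ℓ) =>
            3 * (1 + K) ^ 2 * (2 * dist z.1 z.2 ^ 2 + w ^ 2)) π :=
        ((hd2.const_mul 2).add (integrable_const _)).const_mul _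
      have hpt : ∀ z : (Vec ℓ × Vec ℓ) × (Vec ℓ × Vec ℓ),
          dist (Φ z).1 (Φ z).2 ^ 2 ≤ 3 * (1 + K) ^ 2 * (2 * dist z.1 z.2 ^ 2 + w ^ 2) := by
        intro z
        have hcle : ‖Λ z.1.1 z.1.2 μ - Λ z.2.1 z.2.2 μ'‖
            ≤ K * (dist z.1.1 z.2.1 + dist z.1.2 z.2.2 + w) := by
          have h := hΛK z.1.1 z.2.1 z.1.2 z.2.2 μ μ' hμ hμ'
          rw [← dist_eq_norm z.1.1 z.2.1, ← dist_eq_norm z.1.2 z.2.2] at h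
          exact h
        have hda : dist z.1.1 z.2.1 ≤ dist z.1 z.2 := by
          rw [Prod.dist_eq]; exact le_max_left _ _
        have hdb : dist z.1.2 z.2.2 ≤ dist z.1 z.2 := by
          rw [Prod.dist_eq]; exact le_max_right _ _
        have hdist : dist (Φ z).1 (Φ z).2
            = max (dist z.1.1 z.2.1) ‖Λ z.1.1 z.1.2 μ - Λ z.2.1 z.2.2 μ'‖ := by
          show dist ((z.1.1, Λ z.1.1 z.1.2 μ) : Vec ℓ × Vec m) (z.2.1, Λ z.2.1 z.2.2 μ') = _
          simp only [Prod.dist_eq, dist_eq_norm, Prod.mk_sub_mk, Prod.norm_def]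
        rw [hdist]
        exact sq_bound hK0 hw0 dist_nonneg dist_nonneg (norm_nonneg _) dist_nonneg hcle hda hdb
      have hbound : (∫ z, dist (Φ z).1 (Φ z).2 ^ 2 ∂π)
          ≤ ∫ z, 3 * (1 + K) ^ 2 * (2 * dist z.1 z.2 ^ 2 + w ^ 2) ∂π :=
        integral_mono_of_nonneg (Eventually.of_forall fun z => sq_nonneg _) hRint
          (Eventually.of_forall hpt)
      have hRval : (∫ z, 3 * (1 + K) ^ 2 * (2 * dist z.1 z.2 ^ 2 + w ^ 2) ∂π)
          = 3 * (1 + K) ^ 2 * (2 * r + w ^ 2) := by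
        rw [integral_const_mul, integral_add (hd2.const_mul 2) (integrable_const _),
          integral_const_mul, integral_const, probReal_univ, one_smul,
          ← hrdef]
      refine le_trans hbound ?_
      rw [hRval, hCdef]
      nlinarith
    exact le_trans (csInf_le (cset_bddBelow _ _) hmemF) hval
  -- nonemptiness of the coupling set via the product coupling
  have hne : (cset ξ ξ').Nonempty := by
    haveI := hξ.1
    haveI := hξ'.1
    refine ⟨_, ξ.prod ξ', ⟨?_, ?_⟩, rfl⟩
    · rw [Measure.map_fst_prod, measure_univ, one_smul]
    · rw [Measure.map_snd_prod, measure_univ, one_smul]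
  have h2 : sInf (cset (ξ.map g₁) (ξ'.map g₂)) ≤ C ^ 2 * sInf (cset ξ ξ') := by
    have hdiv : sInf (cset (ξ.map g₁) (ξ'.map g₂)) / C ^ 2 ≤ sInf (cset ξ ξ') := by
      refine le_csInf hne fun b hb => ?_
      rw [div_le_iff₀ (by positivity)]
      calc sInf (cset (ξ.map g₁) (ξ'.map g₂)) ≤ C ^ 2 * b := main b hb
        _ = b * C ^ 2 := mul_comm _ _
    calc sInf (cset (ξ.map g₁) (ξ'.map g₂))
        = sInf (cset (ξ.map g₁) (ξ'.map g₂)) / C ^ 2 * C ^ 2 := by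
          field_simp
      _ ≤ sInf (cset ξ ξ') * C ^ 2 := mul_le_mul_of_nonneg_right hdiv (by positivity)
      _ = C ^ 2 * sInf (cset ξ ξ') := mul_comm _ _
  calc W2 (ξ.map g₁) (ξ'.map g₂)
      = Real.sqrt (sInf (cset (ξ.map g₁) (ξ'.map g₂))) := W2_eq _ _
    _ ≤ Real.sqrt (C ^ 2 * sInf (cset ξ ξ')) := Real.sqrt_le_sqrt h2
    _ = C * Real.sqrt (sInf (cset ξ ξ')) := by
        rw [Real.sqrt_mul (sq_nonneg C), Real.sqrt_sq hC0.le]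
    _ = C * W2 ξ ξ' := by rw [W2_eq]

end MFLDP
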